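/- For distinct indices j, k (with 2 ≤ j < k ≤ n in the last identity, and all indices between 1 and n), the symmetry operators satisfy: (1) χ_{jk}² = Id; (2) χ_{ij} ∘ χ_{ik} ∘ χ_{ij} = χ_{jk} for distinct i, j, k; (3) χ_{jk} ∘ U_{1j} = U_{1k} ∘ χ_{jk} for 2 ≤ j < k ≤ n; and (4) χ_{jk} ∘ d(t) = d(t) ∘ χ_{jk} for every real t > 0. -/

import Mathlib

open scoped TensorProduct

noncomputable section

namespace HeisenbergModel

variable (n : ℕ)

/-- Algebraic model of anti-Fock space: the polynomial algebra `ℂ[x_1,…,x_n]`. -/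
abbrev P := MvPolynomial (Fin n) ℂ

/-- The `(2n+1)`-dimensional coefficient space with distinguished basis
`τ^1,…,τ^n, τ^{1̄},…,τ^{n̄}, τ^w`. -/
abbrev Vc := Fin (2 * n + 1) → ℂ

/-- The exterior algebra `Λ = ⋀ V`. -/
abbrev Lam := ExteriorAlgebra ℂ (Vc n)

/-- The space `P_n ⊗ Λ` on which all operators act. -/
abbrev PL := P n ⊗[ℂ] Lam n

/-- Index of the basis vector `τ^j`. -/
def idx1 (j : Fin n) : Fin (2 * n + 1) := ⟨j.1, by omega⟩

/-- Index of the basis vector `τ^{j̄}`. -/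
def idx2 (j : Fin n) : Fin (2 * n + 1) := ⟨n + j.1, by omega⟩

/-- Index of the basis vector `τ^w`. -/
def idxw : Fin (2 * n + 1) := ⟨2 * n, by omega⟩

/-- The distinguished basis vectors of `V`. -/
def tau (i : Fin (2 * n + 1)) : Vc n := Pi.single i 1

/-- The dual-basis functionals on `V`. -/
def dualf (i : Fin (2 * n + 1)) : Module.Dual ℂ (Vc n) := LinearMap.proj i

/-- Annihilation operator `a_j = ∂/∂x_j` on `P_n`. -/
def aOp (j : Fin n) : P n →ₗ[ℂ] P n := (MvPolynomial.pderiv j).toLinearMap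

/-- Creation operator `a_j^* = (multiplication by x_j)` on `P_n`. -/
def aStarOp (j : Fin n) : P n →ₗ[ℂ] P n := LinearMap.mulLeft ℂ (MvPolynomial.X j)

/-- Left exterior multiplication `e(v)` on `Λ`. -/
def eMulV (v : Vc n) : Lam n →ₗ[ℂ] Lam n := LinearMap.mulLeft ℂ (ExteriorAlgebra.ι ℂ v)

/-- Interior multiplication (left contraction) by a dual functional on `Λ`. -/
def iMulF (f : Module.Dual ℂ (Vc n)) : Lam n →ₗ[ℂ] Lam n :=
  CliffordAlgebra.contractLeft (Q := (0 : QuadraticForm ℂ (Vc n))) f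

/-- Lift an operator on `P_n` to `P_n ⊗ Λ` (acting on the first factor). -/
def onP (f : P n →ₗ[ℂ] P n) : PL n →ₗ[ℂ] PL n := LinearMap.rTensor (Lam n) f

/-- Lift an operator on `Λ` to `P_n ⊗ Λ` (acting on the second factor). -/
def onL (f : Lam n →ₗ[ℂ] Lam n) : PL n →ₗ[ℂ] PL n := LinearMap.lTensor (P n) f

/-- `a_j` acting on `P_n ⊗ Λ`. -/
def A (j : Fin n) : PL n →ₗ[ℂ] PL n := onP n (aOp n j)

/-- `a_j^*` acting on `P_n ⊗ Λ`. -/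
def Astar (j : Fin n) : PL n →ₗ[ℂ] PL n := onP n (aStarOp n j)

/-- `e(τ^j)` acting on `P_n ⊗ Λ`. -/
def E1 (j : Fin n) : PL n →ₗ[ℂ] PL n := onL n (eMulV n (tau n (idx1 n j)))

/-- `e(τ^{j̄})` acting on `P_n ⊗ Λ`. -/
def E2 (j : Fin n) : PL n →ₗ[ℂ] PL n := onL n (eMulV n (tau n (idx2 n j)))

/-- `e(τ^w)` acting on `P_n ⊗ Λ`. -/
def Ew : PL n →ₗ[ℂ] PL n := onL n (eMulV n (tau n (idxw n)))

/-- `i(Z_j)` acting on `P_n ⊗ Λ`. -/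
def I1 (j : Fin n) : PL n →ₗ[ℂ] PL n := onL n (iMulF n (dualf n (idx1 n j)))

/-- `i(Z_{j̄})` acting on `P_n ⊗ Λ`. -/
def I2 (j : Fin n) : PL n →ₗ[ℂ] PL n := onL n (iMulF n (dualf n (idx2 n j)))

/-- `i(W)` acting on `P_n ⊗ Λ`. -/
def Iw : PL n →ₗ[ℂ] PL n := onL n (iMulF n (dualf n (idxw n)))

/-- `θ_j(t) = −√(−1)·√t·(e(τ^j) a_j^* + e(τ^{j̄}) a_j) − √(−1)·e(τ^j) e(τ^{j̄}) i(W)`. -/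
def theta (t : ℝ) (j : Fin n) : PL n →ₗ[ℂ] PL n :=
  (-(Complex.I * (Real.sqrt t : ℝ))) • (E1 n j ∘ₗ Astar n j + E2 n j ∘ₗ A n j)
    - Complex.I • (E1 n j ∘ₗ E2 n j ∘ₗ Iw n)

/-- `θ_j^†(t) = √(−1)·√t·(i(Z_j) a_j + i(Z_{j̄}) a_j^*) + √(−1)·e(τ^w) i(Z_{j̄}) i(Z_j)`. -/
def thetaDag (t : ℝ) (j : Fin n) : PL n →ₗ[ℂ] PL n :=
  (Complex.I * (Real.sqrt t : ℝ)) • (I1 n j ∘ₗ A n j + I2 n j ∘ₗ Astar n j)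
    + Complex.I • (Ew n ∘ₗ I2 n j ∘ₗ I1 n j)

/-- `d(t) = Σ_j θ_j(t) − √(−1)·t·e(τ^w)`. -/
def dOp (t : ℝ) : PL n →ₗ[ℂ] PL n :=
  (∑ j : Fin n, theta n t j) - (Complex.I * (t : ℝ)) • Ew n

/-- `U_{jj} = a_j^* a_j − e(τ^j) i(Z_j) + e(τ^{j̄}) i(Z_{j̄})`. -/
def Udiag (j : Fin n) : PL n →ₗ[ℂ] PL n :=
  Astar n j ∘ₗ A n j - E1 n j ∘ₗ I1 n j + E2 n j ∘ₗ I2 n j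

/-- The `(i,j)` transposition operator `U_{ij} = a_i^* a_j − e(τ^j) i(Z_i) + e(τ^{ī}) i(Z_{j̄})`. -/
def Uoff (i j : Fin n) : PL n →ₗ[ℂ] PL n :=
  Astar n i ∘ₗ A n j - E1 n j ∘ₗ I1 n i + E2 n i ∘ₗ I2 n j

/-- The degree-`p` component `Λ^p` of the exterior algebra, as a submodule. -/
def LamP (p : ℕ) : Submodule ℂ (Lam n) :=
  LinearMap.range (ExteriorAlgebra.ι ℂ : Vc n →ₗ[ℂ] Lam n) ^ p

/-- The subspace `P_n ⊗ Λ^p` of `P_n ⊗ Λ`. -/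
def Wp (p : ℕ) : Submodule ℂ (PL n) :=
  LinearMap.range (TensorProduct.map (LinearMap.id : P n →ₗ[ℂ] P n) (LamP n p).subtype)

/-- The simultaneous eigenspace `V^{p,n,γ} = {v ∈ P_n ⊗ Λ^p : U_{jj} v = γ_j v for all j}`. -/
def Vpγ (p : ℕ) (γ : Fin n → ℤ) : Submodule ℂ (PL n) :=
  Wp n p ⊓ ⨅ j : Fin n, Module.End.eigenspace (Udiag n j) ((γ j : ℂ))


/-- The permutation of the index set exchanging the indices of `τ^j, τ^k` and of
`τ^{j̄}, τ^{k̄}`. -/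
def swapPerm (j k : Fin n) : Equiv.Perm (Fin (2 * n + 1)) :=
  Equiv.swap (idx1 n j) (idx1 n k) * Equiv.swap (idx2 n j) (idx2 n k)

/-- The linear map of `V` exchanging `τ^j ↔ τ^k` and `τ^{j̄} ↔ τ^{k̄}` and fixing the other
distinguished basis vectors. -/
def chiV (j k : Fin n) : Vc n →ₗ[ℂ] Vc n := LinearMap.funLeft ℂ ℂ (swapPerm n j k)

/-- The symmetry operator `χ_{jk}` on `P_n ⊗ Λ`: the algebra automorphism of `P_n`
exchanging `x_j` and `x_k`, tensored with the algebra automorphism of `Λ` induced by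
the linear map `chiV` of `V`. -/
def chi (j k : Fin n) : PL n →ₗ[ℂ] PL n :=
  TensorProduct.map
    ((MvPolynomial.renameEquiv ℂ (Equiv.swap j k)).toAlgHom.toLinearMap)
    ((ExteriorAlgebra.map (chiV n j k)).toLinearMap)


/-! ### Auxiliary lemmas -/

section Aux

variable {n : ℕ}

lemma idx_cases (x : Fin (2 * n + 1)) :
    (∃ m : Fin n, x = idx1 n m) ∨ (∃ m : Fin n, x = idx2 n m) ∨ x = idxw n := by
  by_cases h1 : x.1 < n
  · exact Or.inl ⟨⟨x.1, h1⟩, Fin.ext rfl⟩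
  · by_cases h2 : x.1 < 2 * n
    · exact Or.inr (Or.inl ⟨⟨x.1 - n, by omega⟩, Fin.ext (show x.1 = n + (x.1 - n) by omega)⟩)
    · exact Or.inr (Or.inr (Fin.ext (show x.1 = 2 * n by have := x.2; omega)))

lemma idx1_injective : Function.Injective (idx1 n) := fun a b h => by
  rw [Fin.ext_iff] at h ⊢
  exact h

lemma idx2_injective : Function.Injective (idx2 n) := fun a b h => by
  rw [Fin.ext_iff] at h ⊢
  have h' : n + a.1 = n + b.1 := h
  omega

lemma idx1_ne_idx2 (m m' : Fin n) : idx1 n m ≠ idx2 n m' :=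
  Fin.ne_of_val_ne (show m.1 ≠ n + m'.1 by have := m.2; omega)

lemma idx1_ne_idxw (m : Fin n) : idx1 n m ≠ idxw n :=
  Fin.ne_of_val_ne (show m.1 ≠ 2 * n by have := m.2; omega)

lemma idx2_ne_idxw (m : Fin n) : idx2 n m ≠ idxw n :=
  Fin.ne_of_val_ne (show n + m.1 ≠ 2 * n by have := m.2; omega)

variable (j k : Fin n)

lemma swapPerm_apply_idx1 (m : Fin n) :
    swapPerm n j k (idx1 n m) = idx1 n (Equiv.swap j k m) := by
  simp only [swapPerm, Equiv.Perm.mul_apply]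
  rw [Equiv.swap_apply_of_ne_of_ne (idx1_ne_idx2 m j) (idx1_ne_idx2 m k),
    idx1_injective.swap_apply]

lemma swapPerm_apply_idx2 (m : Fin n) :
    swapPerm n j k (idx2 n m) = idx2 n (Equiv.swap j k m) := by
  simp only [swapPerm, Equiv.Perm.mul_apply]
  rw [idx2_injective.swap_apply,
    Equiv.swap_apply_of_ne_of_ne (Ne.symm (idx1_ne_idx2 j _)) (Ne.symm (idx1_ne_idx2 k _))]

lemma swapPerm_apply_idxw : swapPerm n j k (idxw n) = idxw n := by
  simp only [swapPerm, Equiv.Perm.mul_apply]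
  rw [Equiv.swap_apply_of_ne_of_ne (Ne.symm (idx2_ne_idxw j)) (Ne.symm (idx2_ne_idxw k)),
    Equiv.swap_apply_of_ne_of_ne (Ne.symm (idx1_ne_idxw j)) (Ne.symm (idx1_ne_idxw k))]

lemma swapPerm_swapPerm (x : Fin (2 * n + 1)) :
    swapPerm n j k (swapPerm n j k x) = x := by
  rcases idx_cases x with ⟨m, rfl⟩ | ⟨m, rfl⟩ | rfl <;>
    simp only [swapPerm_apply_idx1, swapPerm_apply_idx2, swapPerm_apply_idxw,
      Equiv.swap_apply_self]

lemma chiV_tau (i : Fin (2 * n + 1)) :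
    chiV n j k (tau n i) = tau n (swapPerm n j k i) := by
  funext x
  simp only [chiV, LinearMap.funLeft_apply, tau, Pi.single_apply]
  refine if_congr ⟨fun h => ?_, fun h => ?_⟩ rfl rfl
  · rw [← h, swapPerm_swapPerm]
  · rw [h, swapPerm_swapPerm]

lemma dualf_comp_chiV (i : Fin (2 * n + 1)) :
    dualf n i ∘ₗ chiV n j k = dualf n (swapPerm n j k i) :=
  LinearMap.ext fun _ => rfl

lemma chiV_comp_chiV : chiV n j k ∘ₗ chiV n j k = LinearMap.id := by
  refine LinearMap.ext fun v => funext fun x => ?_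
  show v (swapPerm n j k (swapPerm n j k x)) = v x
  rw [swapPerm_swapPerm]

lemma map_contractLeft_aux (φ : Vc n →ₗ[ℂ] Vc n) (f : Module.Dual ℂ (Vc n)) (x : Lam n) :
    ExteriorAlgebra.map φ (iMulF n (f ∘ₗ φ) x) = iMulF n f (ExteriorAlgebra.map φ x) := by
  induction x using CliffordAlgebra.left_induction with
  | algebraMap r =>
      simp only [iMulF, CliffordAlgebra.contractLeft_algebraMap, map_zero, AlgHom.commutes]
  | add x y hx hy =>
      simp only [map_add, hx, hy]
  | ι_mul x m hx =>
      simp only [iMulF] at hx ⊢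
      rw [CliffordAlgebra.contractLeft_ι_mul, map_sub, map_smul, map_mul,
        show (CliffordAlgebra.ι (0 : QuadraticForm ℂ (Vc n)) m) = ExteriorAlgebra.ι ℂ m from rfl,
        ExteriorAlgebra.map_apply_ι, map_mul, ExteriorAlgebra.map_apply_ι,
        CliffordAlgebra.contractLeft_ι_mul, hx]
      rfl

/-- The `P`-side component of `chi`. -/
def renL : P n →ₗ[ℂ] P n :=
  (MvPolynomial.renameEquiv ℂ (Equiv.swap j k)).toAlgHom.toLinearMap

/-- The `Λ`-side component of `chi`. -/
def exmL : Lam n →ₗ[ℂ] Lam n := (ExteriorAlgebra.map (chiV n j k)).toLinearMap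

lemma chi_eq : chi n j k = TensorProduct.map (renL j k) (exmL j k) := rfl

lemma chi_comp_map {f f' : P n →ₗ[ℂ] P n} {g g' : Lam n →ₗ[ℂ] Lam n}
    (hP : renL j k ∘ₗ f = f' ∘ₗ renL j k) (hL : exmL j k ∘ₗ g = g' ∘ₗ exmL j k) :
    chi n j k ∘ₗ TensorProduct.map f g = TensorProduct.map f' g' ∘ₗ chi n j k := by
  rw [chi_eq, ← TensorProduct.map_comp, hP, hL, TensorProduct.map_comp]

lemma renL_comp_aOp (m : Fin n) :
    renL j k ∘ₗ aOp n m = aOp n (Equiv.swap j k m) ∘ₗ renL j k :=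
  LinearMap.ext fun p =>
    (MvPolynomial.pderiv_rename (Equiv.injective (Equiv.swap j k)) m p).symm

lemma renL_comp_aStar (m : Fin n) :
    renL j k ∘ₗ aStarOp n m = aStarOp n (Equiv.swap j k m) ∘ₗ renL j k :=
  LinearMap.ext fun p => by
    show MvPolynomial.rename (Equiv.swap j k) (MvPolynomial.X m * p)
      = MvPolynomial.X (Equiv.swap j k m) * MvPolynomial.rename (Equiv.swap j k) p
    rw [map_mul, MvPolynomial.rename_X]

lemma exmL_comp_e (v : Vc n) :
    exmL j k ∘ₗ eMulV n v = eMulV n (chiV n j k v) ∘ₗ exmL j k :=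
  LinearMap.ext fun x => by
    show ExteriorAlgebra.map (chiV n j k) (ExteriorAlgebra.ι ℂ v * x)
      = ExteriorAlgebra.ι ℂ (chiV n j k v) * ExteriorAlgebra.map (chiV n j k) x
    rw [map_mul, ExteriorAlgebra.map_apply_ι]

lemma exmL_comp_i (i : Fin (2 * n + 1)) :
    exmL j k ∘ₗ iMulF n (dualf n i) = iMulF n (dualf n (swapPerm n j k i)) ∘ₗ exmL j k :=
  LinearMap.ext fun x => by
    have h : dualf n i = dualf n (swapPerm n j k i) ∘ₗ chiV n j k := by
      rw [dualf_comp_chiV, swapPerm_swapPerm]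
    rw [LinearMap.comp_apply, LinearMap.comp_apply, h]
    exact map_contractLeft_aux (chiV n j k) (dualf n (swapPerm n j k i)) x

lemma exmL_comp_e1 (m : Fin n) :
    exmL j k ∘ₗ eMulV n (tau n (idx1 n m))
      = eMulV n (tau n (idx1 n (Equiv.swap j k m))) ∘ₗ exmL j k := by
  rw [exmL_comp_e, chiV_tau, swapPerm_apply_idx1]

lemma exmL_comp_e2 (m : Fin n) :
    exmL j k ∘ₗ eMulV n (tau n (idx2 n m))
      = eMulV n (tau n (idx2 n (Equiv.swap j k m))) ∘ₗ exmL j k := by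
  rw [exmL_comp_e, chiV_tau, swapPerm_apply_idx2]

lemma exmL_comp_ew :
    exmL j k ∘ₗ eMulV n (tau n (idxw n)) = eMulV n (tau n (idxw n)) ∘ₗ exmL j k := by
  rw [exmL_comp_e, chiV_tau, swapPerm_apply_idxw]

lemma exmL_comp_i1 (m : Fin n) :
    exmL j k ∘ₗ iMulF n (dualf n (idx1 n m))
      = iMulF n (dualf n (idx1 n (Equiv.swap j k m))) ∘ₗ exmL j k := by
  rw [exmL_comp_i, swapPerm_apply_idx1]

lemma exmL_comp_i2 (m : Fin n) :
    exmL j k ∘ₗ iMulF n (dualf n (idx2 n m))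
      = iMulF n (dualf n (idx2 n (Equiv.swap j k m))) ∘ₗ exmL j k := by
  rw [exmL_comp_i, swapPerm_apply_idx2]

lemma exmL_comp_iw :
    exmL j k ∘ₗ iMulF n (dualf n (idxw n)) = iMulF n (dualf n (idxw n)) ∘ₗ exmL j k := by
  rw [exmL_comp_i, swapPerm_apply_idxw]

lemma comp_comm {M : Type*} [AddCommMonoid M] [Module ℂ M] {a b b' c c' : M →ₗ[ℂ] M}
    (h1 : a ∘ₗ b = b' ∘ₗ a) (h2 : a ∘ₗ c = c' ∘ₗ a) :
    a ∘ₗ (b ∘ₗ c) = (b' ∘ₗ c') ∘ₗ a := by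
  rw [← LinearMap.comp_assoc, h1, LinearMap.comp_assoc, h2, ← LinearMap.comp_assoc]

lemma onL_comp_onP (f : P n →ₗ[ℂ] P n) (g : Lam n →ₗ[ℂ] Lam n) :
    onL n g ∘ₗ onP n f = TensorProduct.map f g :=
  LinearMap.lTensor_comp_rTensor _ _ _

lemma onP_comp_onP (f g : P n →ₗ[ℂ] P n) :
    onP n f ∘ₗ onP n g = onP n (f ∘ₗ g) :=
  (LinearMap.rTensor_comp _ _ _).symm

lemma onL_comp_onL (f g : Lam n →ₗ[ℂ] Lam n) :
    onL n f ∘ₗ onL n g = onL n (f ∘ₗ g) :=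
  (LinearMap.lTensor_comp _ _ _).symm

lemma onP_eq (f : P n →ₗ[ℂ] P n) : onP n f = TensorProduct.map f LinearMap.id := rfl

lemma onL_eq (g : Lam n →ₗ[ℂ] Lam n) : onL n g = TensorProduct.map LinearMap.id g := rfl

lemma chi_comp_onP {f f' : P n →ₗ[ℂ] P n} (h : renL j k ∘ₗ f = f' ∘ₗ renL j k) :
    chi n j k ∘ₗ onP n f = onP n f' ∘ₗ chi n j k := by
  rw [onP_eq, onP_eq]
  exact chi_comp_map j k h (by rw [LinearMap.comp_id, LinearMap.id_comp])

lemma chi_comp_onL {g g' : Lam n →ₗ[ℂ] Lam n} (h : exmL j k ∘ₗ g = g' ∘ₗ exmL j k) :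
    chi n j k ∘ₗ onL n g = onL n g' ∘ₗ chi n j k := by
  rw [onL_eq, onL_eq]
  exact chi_comp_map j k (by rw [LinearMap.comp_id, LinearMap.id_comp]) h

lemma chi_comp_theta (t : ℝ) (m : Fin n) :
    chi n j k ∘ₗ theta n t m = theta n t (Equiv.swap j k m) ∘ₗ chi n j k := by
  have h1 : chi n j k ∘ₗ (E1 n m ∘ₗ Astar n m)
      = (E1 n (Equiv.swap j k m) ∘ₗ Astar n (Equiv.swap j k m)) ∘ₗ chi n j k := by
    rw [show E1 n m ∘ₗ Astar n m = TensorProduct.map (aStarOp n m)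
        (eMulV n (tau n (idx1 n m))) from onL_comp_onP _ _,
      show E1 n (Equiv.swap j k m) ∘ₗ Astar n (Equiv.swap j k m) = TensorProduct.map
        (aStarOp n (Equiv.swap j k m)) (eMulV n (tau n (idx1 n (Equiv.swap j k m))))
        from onL_comp_onP _ _]
    exact chi_comp_map j k (renL_comp_aStar j k m) (exmL_comp_e1 j k m)
  have h2 : chi n j k ∘ₗ (E2 n m ∘ₗ A n m)
      = (E2 n (Equiv.swap j k m) ∘ₗ A n (Equiv.swap j k m)) ∘ₗ chi n j k := by
    rw [show E2 n m ∘ₗ A n m = TensorProduct.map (aOp n m)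
        (eMulV n (tau n (idx2 n m))) from onL_comp_onP _ _,
      show E2 n (Equiv.swap j k m) ∘ₗ A n (Equiv.swap j k m) = TensorProduct.map
        (aOp n (Equiv.swap j k m)) (eMulV n (tau n (idx2 n (Equiv.swap j k m))))
        from onL_comp_onP _ _]
    exact chi_comp_map j k (renL_comp_aOp j k m) (exmL_comp_e2 j k m)
  have h3 : chi n j k ∘ₗ (E1 n m ∘ₗ E2 n m ∘ₗ Iw n)
      = (E1 n (Equiv.swap j k m) ∘ₗ E2 n (Equiv.swap j k m) ∘ₗ Iw n) ∘ₗ chi n j k := by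
    rw [show E1 n m ∘ₗ E2 n m ∘ₗ Iw n = onL n (eMulV n (tau n (idx1 n m)) ∘ₗ
        eMulV n (tau n (idx2 n m)) ∘ₗ iMulF n (dualf n (idxw n))) by
        rw [← onL_comp_onL, ← onL_comp_onL]; rfl,
      show E1 n (Equiv.swap j k m) ∘ₗ E2 n (Equiv.swap j k m) ∘ₗ Iw n
        = onL n (eMulV n (tau n (idx1 n (Equiv.swap j k m))) ∘ₗ
          eMulV n (tau n (idx2 n (Equiv.swap j k m))) ∘ₗ iMulF n (dualf n (idxw n))) by
        rw [← onL_comp_onL, ← onL_comp_onL]; rfl]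
    exact chi_comp_onL j k (comp_comm (exmL_comp_e1 j k m)
      (comp_comm (exmL_comp_e2 j k m) (exmL_comp_iw j k)))
  simp only [theta, LinearMap.comp_sub, LinearMap.sub_comp, LinearMap.comp_smul,
    LinearMap.smul_comp, LinearMap.comp_add, LinearMap.add_comp, h1, h2, h3]

lemma chi_comp_Ew : chi n j k ∘ₗ Ew n = Ew n ∘ₗ chi n j k :=
  chi_comp_onL j k (exmL_comp_ew j k)

end Aux

/-- Basic properties of the symmetry operators: `χ_{jk}² = Id`;
`χ_{ij} χ_{ik} χ_{ij} = χ_{jk}` for distinct `i, j, k`; `χ_{jk} U_{1j} = U_{1k} χ_{jk}`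
for `2 ≤ j < k ≤ n`; and `χ_{jk}` commutes with `d(t)` for every `t > 0`. -/
theorem chi_properties (n : ℕ) (hn : 2 ≤ n) :
    (∀ j k : Fin n, j ≠ k → chi n j k ∘ₗ chi n j k = LinearMap.id) ∧
    (∀ i j k : Fin n, i ≠ j → i ≠ k → j ≠ k →
      chi n i j ∘ₗ chi n i k ∘ₗ chi n i j = chi n j k) ∧
    (∀ j k : Fin n, 1 ≤ (j : ℕ) → (j : ℕ) < (k : ℕ) →
      chi n j k ∘ₗ Uoff n ⟨0, by omega⟩ j = Uoff n ⟨0, by omega⟩ k ∘ₗ chi n j k) ∧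
    (∀ j k : Fin n, j ≠ k → ∀ t : ℝ, 0 < t →
      chi n j k ∘ₗ dOp n t = dOp n t ∘ₗ chi n j k) := by
  refine ⟨?_, ?_, ?_, ?_⟩
  · -- (1) χ² = Id
    intro j k _
    have hr : renL j k ∘ₗ renL j k = LinearMap.id := by
      refine LinearMap.ext fun p => ?_
      show MvPolynomial.rename (Equiv.swap j k) (MvPolynomial.rename (Equiv.swap j k) p) = p
      rw [MvPolynomial.rename_rename,
        show (⇑(Equiv.swap j k) ∘ ⇑(Equiv.swap j k)) = id from
          funext fun x => Equiv.swap_apply_self j k x,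
        MvPolynomial.rename_id]
      exact AlgHom.id_apply _
    have he : exmL j k ∘ₗ exmL j k = LinearMap.id := by
      refine LinearMap.ext fun x => ?_
      show ExteriorAlgebra.map (chiV n j k) (ExteriorAlgebra.map (chiV n j k) x) = x
      rw [show ExteriorAlgebra.map (chiV n j k) (ExteriorAlgebra.map (chiV n j k) x)
          = ExteriorAlgebra.map (chiV n j k ∘ₗ chiV n j k) x from
          AlgHom.congr_fun (ExteriorAlgebra.map_comp_map _ _) x,
        chiV_comp_chiV, ExteriorAlgebra.map_id]
      rfl
    rw [chi_eq, ← TensorProduct.map_comp, hr, he, TensorProduct.map_id]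
  · -- (2) χ_{ij} χ_{ik} χ_{ij} = χ_{jk}
    intro i j k hij hik hjk
    have hgrp : Equiv.swap i j * Equiv.swap i k * Equiv.swap i j = Equiv.swap j k := by
      have h := Equiv.swap_mul_swap_mul_swap (Ne.symm hik) (Ne.symm hjk)
      rwa [Equiv.swap_comm k i] at h
    have hpt : ∀ m : Fin n,
        Equiv.swap i j (Equiv.swap i k (Equiv.swap i j m)) = Equiv.swap j k m := by
      intro m
      rw [← hgrp]
      simp [Equiv.Perm.mul_apply]
    have hr : renL i j ∘ₗ renL i k ∘ₗ renL i j = renL j k := by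
      refine LinearMap.ext fun p => ?_
      show MvPolynomial.rename (Equiv.swap i j) (MvPolynomial.rename (Equiv.swap i k)
        (MvPolynomial.rename (Equiv.swap i j) p)) = MvPolynomial.rename (Equiv.swap j k) p
      rw [MvPolynomial.rename_rename, MvPolynomial.rename_rename,
        show ((⇑(Equiv.swap i j) ∘ ⇑(Equiv.swap i k)) ∘ ⇑(Equiv.swap i j)) = ⇑(Equiv.swap j k)
          from funext fun m => hpt m]
    have hV : ∀ x, swapPerm n i j (swapPerm n i k (swapPerm n i j x)) = swapPerm n j k x := by
      intro x
      rcases idx_cases x with ⟨m, rfl⟩ | ⟨m, rfl⟩ | rfl <;>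
        simp only [swapPerm_apply_idx1, swapPerm_apply_idx2, swapPerm_apply_idxw, hpt]
    have hchiV : chiV n i j ∘ₗ chiV n i k ∘ₗ chiV n i j = chiV n j k := by
      refine LinearMap.ext fun v => funext fun x => ?_
      show v (swapPerm n i j (swapPerm n i k (swapPerm n i j x))) = v (swapPerm n j k x)
      rw [hV]
    have he : exmL i j ∘ₗ exmL i k ∘ₗ exmL i j = exmL j k := by
      refine LinearMap.ext fun x => ?_
      show ExteriorAlgebra.map (chiV n i j) (ExteriorAlgebra.map (chiV n i k)
        (ExteriorAlgebra.map (chiV n i j) x)) = ExteriorAlgebra.map (chiV n j k) x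
      rw [show ExteriorAlgebra.map (chiV n i k) (ExteriorAlgebra.map (chiV n i j) x)
          = ExteriorAlgebra.map (chiV n i k ∘ₗ chiV n i j) x from
          AlgHom.congr_fun (ExteriorAlgebra.map_comp_map _ _) x,
        show ExteriorAlgebra.map (chiV n i j)
            (ExteriorAlgebra.map (chiV n i k ∘ₗ chiV n i j) x)
          = ExteriorAlgebra.map (chiV n i j ∘ₗ chiV n i k ∘ₗ chiV n i j) x from
          AlgHom.congr_fun (ExteriorAlgebra.map_comp_map _ _) x,
        hchiV]
    simp only [chi_eq]
    rw [← TensorProduct.map_comp, ← TensorProduct.map_comp, hr, he]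
  · -- (3) χ_{jk} U_{1j} = U_{1k} χ_{jk}
    intro j k hj hjk
    have hzj : (⟨0, by omega⟩ : Fin n) ≠ j := Fin.ne_of_val_ne (show (0:ℕ) ≠ j.1 by omega)
    have hzk : (⟨0, by omega⟩ : Fin n) ≠ k := Fin.ne_of_val_ne (show (0:ℕ) ≠ k.1 by omega)
    have hswz : Equiv.swap j k ⟨0, by omega⟩ = ⟨0, by omega⟩ :=
      Equiv.swap_apply_of_ne_of_ne hzj hzk
    have hswj : Equiv.swap j k j = k := Equiv.swap_apply_left j k
    have h1 : chi n j k ∘ₗ (Astar n ⟨0, by omega⟩ ∘ₗ A n j)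
        = (Astar n ⟨0, by omega⟩ ∘ₗ A n k) ∘ₗ chi n j k := by
      rw [show Astar n ⟨0, by omega⟩ ∘ₗ A n j
          = onP n (aStarOp n ⟨0, by omega⟩ ∘ₗ aOp n j) from onP_comp_onP _ _,
        show Astar n ⟨0, by omega⟩ ∘ₗ A n k
          = onP n (aStarOp n ⟨0, by omega⟩ ∘ₗ aOp n k) from onP_comp_onP _ _]
      apply chi_comp_onP
      have h := comp_comm (renL_comp_aStar j k ⟨0, by omega⟩) (renL_comp_aOp j k j)
      rwa [hswz, hswj] at h
    have h2 : chi n j k ∘ₗ (E1 n j ∘ₗ I1 n ⟨0, by omega⟩)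
        = (E1 n k ∘ₗ I1 n ⟨0, by omega⟩) ∘ₗ chi n j k := by
      rw [show E1 n j ∘ₗ I1 n ⟨0, by omega⟩ = onL n (eMulV n (tau n (idx1 n j)) ∘ₗ
          iMulF n (dualf n (idx1 n ⟨0, by omega⟩))) from onL_comp_onL _ _,
        show E1 n k ∘ₗ I1 n ⟨0, by omega⟩ = onL n (eMulV n (tau n (idx1 n k)) ∘ₗ
          iMulF n (dualf n (idx1 n ⟨0, by omega⟩))) from onL_comp_onL _ _]
      apply chi_comp_onL
      have h := comp_comm (exmL_comp_e1 j k j) (exmL_comp_i1 j k ⟨0, by omega⟩)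
      rwa [hswz, hswj] at h
    have h3 : chi n j k ∘ₗ (E2 n ⟨0, by omega⟩ ∘ₗ I2 n j)
        = (E2 n ⟨0, by omega⟩ ∘ₗ I2 n k) ∘ₗ chi n j k := by
      rw [show E2 n ⟨0, by omega⟩ ∘ₗ I2 n j = onL n (eMulV n (tau n (idx2 n ⟨0, by omega⟩)) ∘ₗ
          iMulF n (dualf n (idx2 n j))) from onL_comp_onL _ _,
        show E2 n ⟨0, by omega⟩ ∘ₗ I2 n k = onL n (eMulV n (tau n (idx2 n ⟨0, by omega⟩)) ∘ₗ
          iMulF n (dualf n (idx2 n k))) from onL_comp_onL _ _]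
      apply chi_comp_onL
      have h := comp_comm (exmL_comp_e2 j k ⟨0, by omega⟩) (exmL_comp_i2 j k j)
      rwa [hswz, hswj] at h
    simp only [Uoff, LinearMap.comp_sub, LinearMap.sub_comp, LinearMap.comp_add,
      LinearMap.add_comp, h1, h2, h3]
  · -- (4) χ_{jk} commutes with d(t)
    intro j k hjk t ht
    have hsum : chi n j k ∘ₗ (∑ m : Fin n, theta n t m)
        = (∑ m : Fin n, theta n t m) ∘ₗ chi n j k := by
      show chi n j k * (∑ m : Fin n, theta n t m) = (∑ m : Fin n, theta n t m) * chi n j k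
      rw [Finset.mul_sum, Finset.sum_mul,
        ← Equiv.sum_comp (Equiv.swap j k) (fun m => theta n t m * chi n j k)]
      refine Finset.sum_congr rfl fun m _ => ?_
      show chi n j k ∘ₗ theta n t m = theta n t (Equiv.swap j k m) ∘ₗ chi n j k
      exact chi_comp_theta j k t m
    simp only [dOp, LinearMap.comp_sub, LinearMap.sub_comp, LinearMap.comp_smul,
      LinearMap.smul_comp, hsum, chi_comp_Ew]

end HeisenbergModel
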